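/- For every n ≥ 2 and every (x,y) ∈ ℝ² with (x−1−y)(x²−1+y−y²) ≠ 0, the determinants Dₙ(x,y) = det Δₙ(x,y) satisfy the recursion Dₙ(x,y) = (x² − (1+y)²)^{3^{n−2}} · (x²−1+y−y²)^{2·3^{n−2}} · D_{n−1}(F(x,y)), where F(x,y) = (x′,y′) with x′ = x + 2y²(−x² + x + y²)/((x−1−y)(x²−1+y−y²)) and y′ = y²(x−1+y)/((x−1−y)(x²−1+y−y²)). -/

import Mathlib

/-- Generator matrix `aₙ` (size `3ⁿ × 3ⁿ`, indexed by ternary words of length `n`) of the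
level-`n` representation of the Hanoi Towers group: `a₀ = [1]` and
`a_{n+1} = [[0ₙ,1ₙ,0ₙ],[1ₙ,0ₙ,0ₙ],[0ₙ,0ₙ,aₙ]]` in block form. -/
noncomputable def hanoiGenA : (n : ℕ) → Matrix (Fin n → Fin 3) (Fin n → Fin 3) ℝ
  | 0 => 1
  | n + 1 => Matrix.of fun u v =>
      (![![0, 1, 0],
         ![1, 0, 0],
         ![0, 0, hanoiGenA n]] :
        Fin 3 → Fin 3 → Matrix (Fin n → Fin 3) (Fin n → Fin 3) ℝ)
        (u 0) (v 0) (Fin.tail u) (Fin.tail v)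

/-- Generator matrix `bₙ`: `b₀ = [1]`, `b_{n+1} = [[0ₙ,0ₙ,1ₙ],[0ₙ,bₙ,0ₙ],[1ₙ,0ₙ,0ₙ]]`. -/
noncomputable def hanoiGenB : (n : ℕ) → Matrix (Fin n → Fin 3) (Fin n → Fin 3) ℝ
  | 0 => 1
  | n + 1 => Matrix.of fun u v =>
      (![![0, 0, 1],
         ![0, hanoiGenB n, 0],
         ![1, 0, 0]] :
        Fin 3 → Fin 3 → Matrix (Fin n → Fin 3) (Fin n → Fin 3) ℝ)
        (u 0) (v 0) (Fin.tail u) (Fin.tail v)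

/-- Generator matrix `cₙ`: `c₀ = [1]`, `c_{n+1} = [[cₙ,0ₙ,0ₙ],[0ₙ,0ₙ,1ₙ],[0ₙ,1ₙ,0ₙ]]`. -/
noncomputable def hanoiGenC : (n : ℕ) → Matrix (Fin n → Fin 3) (Fin n → Fin 3) ℝ
  | 0 => 1
  | n + 1 => Matrix.of fun u v =>
      (![![hanoiGenC n, 0, 0],
         ![0, 0, 1],
         ![0, 1, 0]] :
        Fin 3 → Fin 3 → Matrix (Fin n → Fin 3) (Fin n → Fin 3) ℝ)
        (u 0) (v 0) (Fin.tail u) (Fin.tail v)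

/-- Auxiliary matrix `dₙ`: `d_{n+1} = [[0ₙ,1ₙ,1ₙ],[1ₙ,0ₙ,1ₙ],[1ₙ,1ₙ,0ₙ]]`. -/
noncomputable def hanoiGenD : (n : ℕ) → Matrix (Fin n → Fin 3) (Fin n → Fin 3) ℝ
  | 0 => 0
  | n + 1 => Matrix.of fun u v =>
      (![![0, 1, 1],
         ![1, 0, 1],
         ![1, 1, 0]] :
        Fin 3 → Fin 3 → Matrix (Fin n → Fin 3) (Fin n → Fin 3) ℝ)
        (u 0) (v 0) (Fin.tail u) (Fin.tail v)

/-- The two-parameter matrix pencil `Δₙ(x,y) = aₙ + bₙ + cₙ - x·I + (y-1)dₙ`. -/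
noncomputable def hanoiDelta (n : ℕ) (x y : ℝ) :
    Matrix (Fin n → Fin 3) (Fin n → Fin 3) ℝ :=
  hanoiGenA n + hanoiGenB n + hanoiGenC n - x • 1 + (y - 1) • hanoiGenD n

/-- `Dₙ(x,y) = det Δₙ(x,y)`. -/
noncomputable def hanoiD (n : ℕ) (x y : ℝ) : ℝ := (hanoiDelta n x y).det

/-- The two-dimensional rational map `F(x,y) = (x', y')`. -/
noncomputable def hanoiMap (p : ℝ × ℝ) : ℝ × ℝ :=
  (p.1 + 2 * p.2 ^ 2 * (-p.1 ^ 2 + p.1 + p.2 ^ 2) /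
      ((p.1 - 1 - p.2) * (p.1 ^ 2 - 1 + p.2 - p.2 ^ 2)),
   p.2 ^ 2 * (p.1 - 1 + p.2) /
      ((p.1 - 1 - p.2) * (p.1 ^ 2 - 1 + p.2 - p.2 ^ 2)))


namespace HanoiRecAux
open Matrix Kronecker

set_option maxHeartbeats 4000000
set_option maxRecDepth 16000

noncomputable section

def D6 (x y : ℝ) : Matrix (Fin 6) (Fin 6) ℝ := Matrix.of fun i j =>
  if i = j then -x
  else if (i = 0 ∧ j = 1) ∨ (i = 1 ∧ j = 0) ∨ (i = 2 ∧ j = 3) ∨ (i = 3 ∧ j = 2)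
        ∨ (i = 4 ∧ j = 5) ∨ (i = 5 ∧ j = 4) then 1
  else if (i = 0 ∧ j = 5) ∨ (i = 5 ∧ j = 0) ∨ (i = 1 ∧ j = 3) ∨ (i = 3 ∧ j = 1)
        ∨ (i = 2 ∧ j = 4) ∨ (i = 4 ∧ j = 2) then y
  else 0

def B3 (y : ℝ) : Matrix (Fin 3) (Fin 6) ℝ := Matrix.of fun i j =>
  if (i = 0 ∧ j = 2) ∨ (i = 0 ∧ j = 4) ∨ (i = 1 ∧ j = 0) ∨ (i = 1 ∧ j = 5)
    ∨ (i = 2 ∧ j = 1) ∨ (i = 2 ∧ j = 3) then y else 0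

def V3 (x y : ℝ) : Matrix (Fin 3) (Fin 6) ℝ := Matrix.of fun i j =>
  (if (i = 0 ∧ j = 0) ∨ (i = 0 ∧ j = 1) ∨ (i = 1 ∧ j = 2) ∨ (i = 1 ∧ j = 3)
     ∨ (i = 2 ∧ j = 4) ∨ (i = 2 ∧ j = 5) then -y^2
   else if (i = 0 ∧ j = 2) ∨ (i = 0 ∧ j = 4) ∨ (i = 1 ∧ j = 0) ∨ (i = 1 ∧ j = 5)
     ∨ (i = 2 ∧ j = 1) ∨ (i = 2 ∧ j = 3) then y^3 + x*y - x^2*y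
   else y - x*y) / ((x - 1 - y) * (x ^ 2 - 1 + y - y ^ 2))

def T3 (x y : ℝ) : Matrix (Fin 3) (Fin 3) ℝ := Matrix.of fun i j =>
  if i = j then -x else y

lemma V3_mul_D6 (x y : ℝ) (h : (x - 1 - y) * (x ^ 2 - 1 + y - y ^ 2) ≠ 0) :
    V3 x y * D6 x y = B3 y := by
  have h1 := left_ne_zero_of_mul h
  have h2 := right_ne_zero_of_mul h
  ext i j
  fin_cases i <;> fin_cases j <;>
    (simp (config := { decide := true }) [V3, D6, B3, Matrix.mul_apply, Fin.sum_univ_succ]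
     <;> field_simp <;> ring)

lemma D6_symm (x y : ℝ) : (D6 x y)ᵀ = D6 x y := by
  ext i j
  fin_cases i <;> fin_cases j <;>
    simp (config := { decide := true }) [D6]

lemma schur_eq (x y : ℝ) (h : (x - 1 - y) * (x ^ 2 - 1 + y - y ^ 2) ≠ 0) :
    T3 (x + 2 * y ^ 2 * (-x ^ 2 + x + y ^ 2) / ((x - 1 - y) * (x ^ 2 - 1 + y - y ^ 2)))
        (y ^ 2 * (x - 1 + y) / ((x - 1 - y) * (x ^ 2 - 1 + y - y ^ 2)))
      + B3 y * (V3 x y)ᵀ = T3 x 0 := by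
  have h1 := left_ne_zero_of_mul h
  have h2 := right_ne_zero_of_mul h
  ext i j
  fin_cases i <;> fin_cases j <;>
    (simp (config := { decide := true }) [V3, B3, T3, Matrix.mul_apply, Fin.sum_univ_succ]
     <;> field_simp <;> ring)

lemma D6_det (x y : ℝ) :
    (D6 x y).det = (x ^ 2 - (1 + y) ^ 2) * (x ^ 2 - 1 + y - y ^ 2) ^ 2 := by
  have hD : D6 x y = !![-x, 1, 0, 0, 0, y; 1, -x, 0, y, 0, 0; 0, 0, -x, 1, y, 0;
      0, y, 1, -x, 0, 0; 0, 0, y, 0, -x, 1; y, 0, 0, 0, 1, -x] := by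
    ext i j
    fin_cases i <;> fin_cases j <;> simp (config := { decide := true }) [D6]
  rw [hD]
  simp [Matrix.det_succ_row_zero, Fin.sum_univ_succ, Fin.succAbove]
  ring

lemma delta_apply (k : ℕ) (x y : ℝ) (i j : Fin 3) (s t : Fin k → Fin 3) :
    hanoiDelta (k+1) x y (Fin.cons i s) (Fin.cons j t) =
      T3 x y i j * (if s = t then 1 else 0) +
      (if i = j then ![hanoiGenC k, hanoiGenB k, hanoiGenA k] i s t else 0) := by
  fin_cases i <;> fin_cases j <;>
    simp only [hanoiDelta, hanoiGenA, hanoiGenB, hanoiGenC, hanoiGenD, Matrix.sub_apply,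
      Matrix.add_apply, Matrix.smul_apply, Matrix.one_apply, Fin.cons_inj, Matrix.of_apply,
      Fin.cons_zero, Fin.tail_cons, Fin.reduceFinMk, Matrix.cons_val, T3] <;>
    simp (config := { decide := true }) [hanoiDelta, hanoiGenA, hanoiGenB, hanoiGenC,
      hanoiGenD, T3, Matrix.one_apply, Fin.cons_inj, Matrix.sub_apply, Matrix.add_apply,
      Matrix.smul_apply, mul_ite, mul_one, mul_zero] <;> split_ifs <;> ring

lemma delta_apply' (k : ℕ) (x y : ℝ) (i j : Fin 3) (s t : Fin (k+1) → Fin 3) :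
    hanoiDelta (k+2) x y (Fin.cons i s) (Fin.cons j t) =
      T3 x y i j * (if s = t then 1 else 0) +
      (if i = j then ![hanoiGenC (k+1), hanoiGenB (k+1), hanoiGenA (k+1)] i s t else 0) :=
  delta_apply (k+1) x y i j s t

def pairF : Fin 3 ⊕ Fin 6 → Fin 3 × Fin 3
  | .inl i => (i, i)
  | .inr k =>
      if k = 0 then (0,1) else if k = 1 then (0,2) else if k = 2 then (1,0)
      else if k = 3 then (1,2) else if k = 4 then (2,0) else (2,1)

def pairInv (p : Fin 3 × Fin 3) : Fin 3 ⊕ Fin 6 :=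
  if p.1 = p.2 then .inl p.1
  else if p = (0,1) then .inr 0 else if p = (0,2) then .inr 1
  else if p = (1,0) then .inr 2 else if p = (1,2) then .inr 3
  else if p = (2,0) then .inr 4 else .inr 5

def pairEquiv : (Fin 3 ⊕ Fin 6) ≃ (Fin 3 × Fin 3) :=
  ⟨pairF, pairInv, by decide, by decide⟩

variable (m : ℕ)

def bigE : ((Fin 3 × (Fin m → Fin 3)) ⊕ (Fin 6 × (Fin m → Fin 3))) ≃ (Fin (m+2) → Fin 3) :=
  (Equiv.sumProdDistrib (Fin 3) (Fin 6) (Fin m → Fin 3)).symm.trans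
    ((pairEquiv.prodCongr (Equiv.refl (Fin m → Fin 3))).trans
      ((Equiv.prodAssoc (Fin 3) (Fin 3) (Fin m → Fin 3)).trans
        (((Equiv.refl (Fin 3)).prodCongr (Fin.consEquiv fun _ : Fin (m+1) => Fin 3)).trans
          (Fin.consEquiv fun _ : Fin (m+2) => Fin 3))))

lemma bigE_inl (i : Fin 3) (s : Fin m → Fin 3) :
    bigE m (.inl (i, s)) = Fin.cons (pairF (.inl i)).1 (Fin.cons (pairF (.inl i)).2 s) := rfl

lemma bigE_inr (k : Fin 6) (s : Fin m → Fin 3) :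
    bigE m (.inr (k, s)) = Fin.cons (pairF (.inr k)).1 (Fin.cons (pairF (.inr k)).2 s) := rfl

/-- The block-diagonal recursive part. -/
def Gd : Matrix (Fin 3 × (Fin m → Fin 3)) (Fin 3 × (Fin m → Fin 3)) ℝ :=
  Matrix.of fun p q =>
    if p.1 = q.1 then ![hanoiGenC m, hanoiGenB m, hanoiGenA m] p.1 p.2 q.2 else 0

/-- Reindexing of `hanoiDelta (m+1)`. -/
lemma delta_reindex (x y : ℝ) :
    (hanoiDelta (m+1) x y).submatrix
        (fun p : Fin 3 × (Fin m → Fin 3) => Fin.cons p.1 p.2)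
        (fun p : Fin 3 × (Fin m → Fin 3) => Fin.cons p.1 p.2) =
      kroneckerMap (· * ·) (T3 x y) (1 : Matrix (Fin m → Fin 3) (Fin m → Fin 3) ℝ) + Gd m := by
  ext p q
  obtain ⟨i, s⟩ := p
  obtain ⟨j, t⟩ := q
  rw [Matrix.submatrix_apply, delta_apply]
  simp [Gd, Matrix.one_apply, Matrix.kroneckerMap_apply, Matrix.add_apply]

/-- Block structure of the reindexed `hanoiDelta (m+2)`. -/
lemma delta2_blocks (x y : ℝ) :
    (hanoiDelta (m+2) x y).submatrix (bigE m) (bigE m) =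
      Matrix.fromBlocks
        (kroneckerMap (· * ·) (T3 x 0) (1 : Matrix (Fin m → Fin 3) (Fin m → Fin 3) ℝ) + Gd m)
        (kroneckerMap (· * ·) (B3 y) 1)
        (kroneckerMap (· * ·) (B3 y)ᵀ 1)
        (kroneckerMap (· * ·) (D6 x y) 1) := by
  ext p q
  obtain p | p := p <;> obtain q | q := q <;> obtain ⟨i, s⟩ := p <;> obtain ⟨j, t⟩ := q <;>
    rw [Matrix.submatrix_apply] <;>
    [rw [bigE_inl, bigE_inl]; rw [bigE_inl, bigE_inr]; rw [bigE_inr, bigE_inl];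
     rw [bigE_inr, bigE_inr]] <;>
    fin_cases i <;> fin_cases j <;>
    simp only [delta_apply', pairF, Gd, hanoiGenA, hanoiGenB, hanoiGenC, Matrix.of_apply,
      Fin.cons_zero, Fin.tail_cons, Fin.reduceFinMk, Fin.reduceEq, Fin.isValue, ↓reduceIte,
      Matrix.cons_val] <;>
    simp (config := { decide := true }) [delta_apply', pairF, Gd, T3, B3, D6,
       hanoiGenA, hanoiGenB, hanoiGenC, Matrix.one_apply, Fin.cons_inj,
       Matrix.kroneckerMap_apply, Matrix.add_apply, mul_ite, mul_one, mul_zero,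
       Matrix.vecHead, Matrix.vecTail]


lemma main_aux (m : ℕ) (x y : ℝ)
    (h : (x - 1 - y) * (x ^ 2 - 1 + y - y ^ 2) ≠ 0) :
    hanoiD (m+2) x y =
      ((x ^ 2 - (1 + y) ^ 2) * (x ^ 2 - 1 + y - y ^ 2) ^ 2) ^ 3 ^ m *
        hanoiD (m+1) (hanoiMap (x, y)).1 (hanoiMap (x, y)).2 := by
  have hm1 : (hanoiMap (x, y)).1
      = x + 2 * y ^ 2 * (-x ^ 2 + x + y ^ 2) / ((x - 1 - y) * (x ^ 2 - 1 + y - y ^ 2)) := rfl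
  have hm2 : (hanoiMap (x, y)).2
      = y ^ 2 * (x - 1 + y) / ((x - 1 - y) * (x ^ 2 - 1 + y - y ^ 2)) := rfl
  set x' := (hanoiMap (x, y)).1 with hx'
  set y' := (hanoiMap (x, y)).2 with hy'
  -- kronecker pieces
  set V' := kroneckerMap (· * ·) (V3 x y) (1 : Matrix (Fin m → Fin 3) (Fin m → Fin 3) ℝ)
    with hV'
  set W' := kroneckerMap (· * ·) (V3 x y)ᵀ (1 : Matrix (Fin m → Fin 3) (Fin m → Fin 3) ℝ)
    with hW'
  set D' := kroneckerMap (· * ·) (D6 x y) (1 : Matrix (Fin m → Fin 3) (Fin m → Fin 3) ℝ)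
    with hD'
  set A1 := kroneckerMap (· * ·) (T3 x' y') (1 : Matrix (Fin m → Fin 3) (Fin m → Fin 3) ℝ)
    + Gd m with hA1
  have hVD : V' * D' = kroneckerMap (· * ·) (B3 y) 1 := by
    rw [hV', hD', ← Matrix.mul_kronecker_mul, V3_mul_D6 x y h, Matrix.one_mul]
  have hDW : D' * W' = kroneckerMap (· * ·) (B3 y)ᵀ 1 := by
    rw [hD', hW', ← Matrix.mul_kronecker_mul, Matrix.one_mul, ← D6_symm x y,
      ← Matrix.transpose_mul, V3_mul_D6 x y h]
  have hBW : kroneckerMap (· * ·) (B3 y) (1 : Matrix (Fin m → Fin 3) (Fin m → Fin 3) ℝ) * W'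
      = kroneckerMap (· * ·) (B3 y * (V3 x y)ᵀ) 1 := by
    rw [hW', ← Matrix.mul_kronecker_mul, Matrix.one_mul]
  have hschur : A1 + kroneckerMap (· * ·) (B3 y * (V3 x y)ᵀ) 1
      = kroneckerMap (· * ·) (T3 x 0) (1 : Matrix (Fin m → Fin 3) (Fin m → Fin 3) ℝ)
        + Gd m := by
    rw [hA1, add_right_comm, ← Matrix.add_kronecker, hm1, hm2,
      schur_eq x y h]
  have fact :
      Matrix.fromBlocks
        (kroneckerMap (· * ·) (T3 x 0) (1 : Matrix (Fin m → Fin 3) (Fin m → Fin 3) ℝ) + Gd m)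
        (kroneckerMap (· * ·) (B3 y) 1)
        (kroneckerMap (· * ·) (B3 y)ᵀ 1)
        (kroneckerMap (· * ·) (D6 x y) 1) =
      Matrix.fromBlocks 1 V' 0 1 * Matrix.fromBlocks A1 0 0 D' *
        Matrix.fromBlocks 1 0 W' 1 := by
    rw [Matrix.fromBlocks_multiply, Matrix.fromBlocks_multiply]
    simp only [Matrix.one_mul, Matrix.mul_one, Matrix.zero_mul, Matrix.mul_zero,
      Matrix.mul_one, add_zero, zero_add, Matrix.add_mul]
    rw [hVD, hDW, hBW, hschur, ← hD']
  have hdetL : (Matrix.fromBlocks (1 : Matrix (Fin 3 × (Fin m → Fin 3)) _ ℝ) V' 0 1).det = 1 := by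
    rw [Matrix.det_fromBlocks_zero₂₁, Matrix.det_one, Matrix.det_one, mul_one]
  have hdetU : (Matrix.fromBlocks (1 : Matrix (Fin 3 × (Fin m → Fin 3)) _ ℝ) 0 W' 1).det = 1 := by
    rw [Matrix.det_fromBlocks_zero₁₂, Matrix.det_one, Matrix.det_one, mul_one]
  have hdetA1 : A1.det = hanoiD (m+1) x' y' := by
    rw [hA1, ← delta_reindex m x' y']
    exact Matrix.det_submatrix_equiv_self (Fin.consEquiv fun _ : Fin (m+1) => Fin 3) _
  have hdetD' : D'.det = ((x ^ 2 - (1 + y) ^ 2) * (x ^ 2 - 1 + y - y ^ 2) ^ 2) ^ 3 ^ m := by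
    rw [hD', Matrix.det_kronecker, D6_det, Matrix.det_one, one_pow, mul_one]
    congr 1
    rw [Fintype.card_fun, Fintype.card_fin, Fintype.card_fin]
  calc hanoiD (m+2) x y
      = ((hanoiDelta (m+2) x y).submatrix (bigE m) (bigE m)).det :=
        (Matrix.det_submatrix_equiv_self _ _).symm
    _ = _ := by
        rw [delta2_blocks m x y, fact, Matrix.det_mul, Matrix.det_mul, hdetL, hdetU,
          Matrix.det_fromBlocks_zero₂₁, hdetA1, hdetD']
        ring

end

end HanoiRecAux

/-- The Schur-complement recursion for the determinants `Dₙ(x,y)`: for `n ≥ 2` and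
`(x-1-y)(x²-1+y-y²) ≠ 0`,
`Dₙ(x,y) = (x²-(1+y)²)^{3^{n-2}} (x²-1+y-y²)^{2·3^{n-2}} D_{n-1}(F(x,y))`. -/
theorem hanoiD_recursion (n : ℕ) (hn : 2 ≤ n) (x y : ℝ)
    (h : (x - 1 - y) * (x ^ 2 - 1 + y - y ^ 2) ≠ 0) :
    hanoiD n x y =
      (x ^ 2 - (1 + y) ^ 2) ^ 3 ^ (n - 2) *
        (x ^ 2 - 1 + y - y ^ 2) ^ (2 * 3 ^ (n - 2)) *
        hanoiD (n - 1) (hanoiMap (x, y)).1 (hanoiMap (x, y)).2 := by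
  obtain ⟨m, rfl⟩ : ∃ m, n = m + 2 := ⟨n - 2, by omega⟩
  rw [show m + 2 - 2 = m from rfl, show m + 2 - 1 = m + 1 from rfl,
    HanoiRecAux.main_aux m x y h, mul_pow, ← pow_mul]
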